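/- Let J_m ⊂ K[e_{i,j}] be the monomial ideal minimally generated by {e_i'' e_j' : 1 ≤ i < j ≤ m}, where e_j' = e_{j,1} e_{j,3} ⋯ e_{j,2p_j+1} and e_i'' = e_{i,2} e_{i,4} ⋯ e_{i,2p_i} are squarefree monomials in pairwise disjoint variables. Then J_{m-1} ∩ e_m' (e_1'',...,e_{m-1}'') = e_m' J_{m-1}. -/

import Mathlib

open MvPolynomial

/-- The edge index type of the bouquet graph `A_{p₁,…,p_m}`: `⟨i, j⟩` is the edge
`e_{i,j+1}` of the `i`-th odd cycle (of length `2pᵢ+1`). -/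
abbrev bouquetEdge (m : ℕ) (p : Fin m → ℕ) : Type :=
  Σ i : Fin m, Fin (2 * p i + 1)

/-- `e'ᵢ = e_{i,1} e_{i,3} ⋯ e_{i,2pᵢ+1}`, the product of the odd-indexed edge
variables of the `i`-th cycle, in `K[E(A)]`. -/
noncomputable def eOdd (m : ℕ) (p : Fin m → ℕ) (K : Type*) [CommRing K] (i : Fin m) :
    MvPolynomial (bouquetEdge m p) K :=
  ∏ j : Fin (p i + 1), X ⟨i, ⟨2 * (j : ℕ), by have := j.isLt; omega⟩⟩

/-- `e''ᵢ = e_{i,2} e_{i,4} ⋯ e_{i,2pᵢ}`, the product of the even-indexed edge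
variables of the `i`-th cycle, in `K[E(A)]`. -/
noncomputable def eEven (m : ℕ) (p : Fin m → ℕ) (K : Type*) [CommRing K] (i : Fin m) :
    MvPolynomial (bouquetEdge m p) K :=
  ∏ j : Fin (p i), X ⟨i, ⟨2 * (j : ℕ) + 1, by have := j.isLt; omega⟩⟩

/-- `J_{m-1}`: the monomial ideal generated by `e''ᵢ e'ⱼ` for `1 ≤ i < j ≤ m−1`. -/
noncomputable def Jprev (m : ℕ) (p : Fin m → ℕ) (K : Type*) [CommRing K] :
    Ideal (MvPolynomial (bouquetEdge m p) K) :=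
  Ideal.span {f | ∃ i j : Fin m, (i : ℕ) < (j : ℕ) ∧ (j : ℕ) + 1 < m ∧
    f = eEven m p K i * eOdd m p K j}

/-- `H_m = (e''₁, …, e''_{m-1})`. -/
noncomputable def Hm (m : ℕ) (p : Fin m → ℕ) (K : Type*) [CommRing K] :
    Ideal (MvPolynomial (bouquetEdge m p) K) :=
  Ideal.span {f | ∃ i : Fin m, (i : ℕ) + 1 < m ∧ f = eEven m p K i}

/-- Exponent vector of `e'ᵢ`. -/
noncomputable def vOdd (m : ℕ) (p : Fin m → ℕ) (i : Fin m) : bouquetEdge m p →₀ ℕ :=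
  ∑ j : Fin (p i + 1), Finsupp.single ⟨i, ⟨2 * (j : ℕ), by have := j.isLt; omega⟩⟩ 1

/-- Exponent vector of `e''ᵢ`. -/
noncomputable def vEven (m : ℕ) (p : Fin m → ℕ) (i : Fin m) : bouquetEdge m p →₀ ℕ :=
  ∑ j : Fin (p i), Finsupp.single ⟨i, ⟨2 * (j : ℕ) + 1, by have := j.isLt; omega⟩⟩ 1

lemma prod_X_eq_monomial {σ K : Type*} [CommRing K] {ι : Type*} (s : Finset ι) (f : ι → σ) :
    (∏ i ∈ s, (X (f i) : MvPolynomial σ K)) =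
      monomial (∑ i ∈ s, Finsupp.single (f i) 1) 1 := by
  classical
  induction s using Finset.induction with
  | empty => simp
  | @insert _ _ h ih =>
      rw [Finset.prod_insert h, Finset.sum_insert h, ih, X, monomial_mul, one_mul]

lemma eOdd_eq_monomial (m : ℕ) (p : Fin m → ℕ) (K : Type*) [CommRing K] (i : Fin m) :
    eOdd m p K i = monomial (vOdd m p i) (1 : K) :=
  prod_X_eq_monomial _ _

lemma eEven_eq_monomial (m : ℕ) (p : Fin m → ℕ) (K : Type*) [CommRing K] (i : Fin m) :
    eEven m p K i = monomial (vEven m p i) (1 : K) :=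
  prod_X_eq_monomial _ _

lemma vOdd_apply_ne {m : ℕ} {p : Fin m → ℕ} {i : Fin m} {x : bouquetEdge m p}
    (h : x.1 ≠ i) : vOdd m p i x = 0 := by
  rw [vOdd, Finsupp.finset_sum_apply]
  refine Finset.sum_eq_zero fun j _ => Finsupp.single_eq_of_ne fun hEq => ?_
  subst hEq; exact h rfl

lemma vEven_apply_ne {m : ℕ} {p : Fin m → ℕ} {i : Fin m} {x : bouquetEdge m p}
    (h : x.1 ≠ i) : vEven m p i x = 0 := by
  rw [vEven, Finsupp.finset_sum_apply]
  refine Finset.sum_eq_zero fun j _ => Finsupp.single_eq_of_ne fun hEq => ?_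
  subst hEq; exact h rfl

/-- `J_{m−1} ∩ e'_m (e''₁,…,e''_{m−1}) = e'_m J_{m−1}`. -/
theorem stmt11 (m : ℕ) (p : Fin m → ℕ) (K : Type*) [Field K]
    (hm : 2 ≤ m) (hp : ∀ i, 0 < p i) :
    Jprev m p K ⊓
        (Ideal.span {eOdd m p K ⟨m - 1, by omega⟩} * Hm m p K) =
      Ideal.span {eOdd m p K ⟨m - 1, by omega⟩} * Jprev m p K := by
  classical
  set L : Fin m := ⟨m - 1, by omega⟩ with hL
  set e : MvPolynomial (bouquetEdge m p) K := eOdd m p K L with he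
  -- auxiliary monomial generating sets
  set SJ : Set (bouquetEdge m p →₀ ℕ) :=
    {s | ∃ i j : Fin m, (i : ℕ) < (j : ℕ) ∧ (j : ℕ) + 1 < m ∧
      s = vEven m p i + vOdd m p j} with hSJ
  set SH : Set (bouquetEdge m p →₀ ℕ) :=
    {s | ∃ i : Fin m, (i : ℕ) + 1 < m ∧ s = vOdd m p L + vEven m p i} with hSH
  set SE : Set (bouquetEdge m p →₀ ℕ) :=
    {s | ∃ i j : Fin m, (i : ℕ) < (j : ℕ) ∧ (j : ℕ) + 1 < m ∧
      s = vOdd m p L + (vEven m p i + vOdd m p j)} with hSE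
  have hJle : Jprev m p K ≤ Ideal.span ((fun s => monomial s (1 : K)) '' SJ) := by
    rw [Jprev, Ideal.span_le]
    rintro f ⟨i, j, h1, h2, rfl⟩
    refine Ideal.subset_span ⟨vEven m p i + vOdd m p j, ⟨i, j, h1, h2, rfl⟩, ?_⟩
    rw [eEven_eq_monomial, eOdd_eq_monomial, monomial_mul, one_mul]
  have heHle : Ideal.span {e} * Hm m p K ≤
      Ideal.span ((fun s => monomial s (1 : K)) '' SH) := by
    rw [Ideal.mul_le]
    rintro r hr s hs
    rw [Ideal.mem_span_singleton] at hr
    obtain ⟨c, rfl⟩ := hr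
    have key : e * s ∈ Ideal.span ((fun s => monomial s (1 : K)) '' SH) := by
      refine Submodule.span_induction ?_ ?_ ?_ ?_ hs
      · rintro g ⟨i, hi, rfl⟩
        refine Ideal.subset_span ⟨vOdd m p L + vEven m p i, ⟨i, hi, rfl⟩, ?_⟩
        rw [he, eEven_eq_monomial, eOdd_eq_monomial, monomial_mul, one_mul]
      · simp
      · intro a b _ _ ha hb
        rw [mul_add]; exact Ideal.add_mem _ ha hb
      · intro a b _ hb
        rw [smul_eq_mul]
        have h' : e * (a * b) = a * (e * b) := by ring
        rw [h']
        exact Ideal.mul_mem_left _ _ hb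
    have h'' : e * c * s = c * (e * s) := by ring
    rw [h'']
    exact Ideal.mul_mem_left _ _ key
  have hSEle : Ideal.span ((fun s => monomial s (1 : K)) '' SE) ≤
      Ideal.span {e} * Jprev m p K := by
    rw [Ideal.span_le]
    rintro f ⟨t, ⟨i, j, h1, h2, rfl⟩, rfl⟩
    show monomial (vOdd m p L + (vEven m p i + vOdd m p j)) (1 : K) ∈
      (Ideal.span {e} * Jprev m p K : Ideal _)
    have : (monomial (vOdd m p L + (vEven m p i + vOdd m p j)) (1 : K)) =
        e * (eEven m p K i * eOdd m p K j) := by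
      rw [he, eEven_eq_monomial, eOdd_eq_monomial, eOdd_eq_monomial,
        monomial_mul, monomial_mul, one_mul, one_mul]
    rw [this]
    exact Ideal.mul_mem_mul (Ideal.subset_span rfl)
      (Ideal.subset_span ⟨i, j, h1, h2, rfl⟩)
  refine le_antisymm ?_ ?_
  · -- hard direction
    intro f hf
    obtain ⟨hfJ, hfH⟩ := hf
    have hfJ' := mem_ideal_span_monomial_image.1 (hJle hfJ)
    have hfH' := mem_ideal_span_monomial_image.1 (heHle hfH)
    refine hSEle (mem_ideal_span_monomial_image.2 fun xi hxi => ?_)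
    obtain ⟨s1, ⟨i, j, h1, h2, rfl⟩, hs1⟩ := hfJ' xi hxi
    obtain ⟨s2, ⟨k, hk, rfl⟩, hs2⟩ := hfH' xi hxi
    refine ⟨vOdd m p L + (vEven m p i + vOdd m p j), ⟨i, j, h1, h2, rfl⟩, ?_⟩
    rw [Finsupp.le_def] at hs1 hs2 ⊢
    intro x
    by_cases hx : x.1 = L
    · have hxi' : x.1 ≠ i := by
        rw [hx]; intro hc
        have : (i : ℕ) = m - 1 := by rw [← hc]
        omega
      have hxj : x.1 ≠ j := by
        rw [hx]; intro hc
        have : (j : ℕ) = m - 1 := by rw [← hc]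
        omega
      have hxk : x.1 ≠ k := by
        rw [hx]; intro hc
        have : (k : ℕ) = m - 1 := by rw [← hc]
        omega
      have := hs2 x
      rw [Finsupp.add_apply] at this
      rw [Finsupp.add_apply, Finsupp.add_apply, vEven_apply_ne hxi',
        vOdd_apply_ne hxj, vEven_apply_ne hxk] at *
      omega
    · have := hs1 x
      rw [Finsupp.add_apply, Finsupp.add_apply, vOdd_apply_ne hx]
      rw [Finsupp.add_apply] at this
      omega
  · refine le_inf ?_ (Ideal.mul_mono_right ?_)
    · exact Ideal.mul_le_right
    · rw [Jprev, Ideal.span_le]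
      rintro f ⟨i, j, h1, h2, rfl⟩
      rw [mul_comm]
      exact Ideal.mul_mem_left _ _ (Ideal.subset_span ⟨i, by omega, rfl⟩)
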